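/- Let (X, r) be an involutive near-rack solution, so r(i,j) = (τ(i), τ(j)) with σ_i = τ for all i, where τ² = id ≠ τ. Let R : X × X → k^× satisfy the scalar Yang–Baxter condition R_{i,j} R_{τ(i),k} R_{τ(j), τ(k)} = R_{j,k} R_{i,τ(k)} R_{τ(i),τ(j)} for all i, j, k ∈ X. Then R_{i,τ(j)} R_{j,τ(i)} = R_{τ(j),i} R_{τ(i),j} for all i, j ∈ X, and in particular R_{τ(i),i} = R_{i,τ(i)}. -/
import Mathlib


theorem stmt16 {X : Type*} {k : Type*} [Field k]
    (τ : X → X) (hτbij : Function.Bijective τ)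
    (hτ2 : τ ∘ τ = id) (hτne : τ ≠ id)
    (R : X → X → k) (hR0 : ∀ i j : X, R i j ≠ 0)
    (hR : ∀ i j l : X,
      R i j * R (τ i) l * R (τ j) (τ l)
        = R j l * R i (τ l) * R (τ i) (τ j)) :
    (∀ i j : X, R i (τ j) * R j (τ i) = R (τ j) i * R (τ i) j) ∧
      ∀ i : X, R (τ i) i = R i (τ i) := by
  have hτ' : ∀ x, τ (τ x) = x := fun x => congrFun hτ2 x
  -- diagonal symmetry: R j (τ j) = R (τ j) j
  have diag : ∀ j, R j (τ j) = R (τ j) j := by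
    intro j
    have h := hR j (τ j) j
    rw [hτ'] at h
    have h2 : R j (τ j) * (R (τ j) j * R j (τ j))
        = R (τ j) j * (R (τ j) j * R j (τ j)) := by linear_combination h
    exact mul_right_cancel₀ (mul_ne_zero (hR0 _ _) (hR0 _ _)) h2
  refine ⟨?_, fun i => (diag i).symm⟩
  intro i j
  have h1 := hR i i j
  -- h1 : R i i * R (τ i) j * R (τ i) (τ j) = R i j * R i (τ j) * R (τ i) (τ i)
  have h2 := hR i j (τ i)
  simp only [hτ'] at h2
  -- h2 : R i j * R (τ i) (τ i) * R (τ j) i = R j (τ i) * R i i * R (τ i) (τ j)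
  have key : (R i (τ j) * R j (τ i))
        * (R i i * R i j * R (τ i) (τ i) * R (τ i) (τ j))
      = (R (τ j) i * R (τ i) j)
        * (R i i * R i j * R (τ i) (τ i) * R (τ i) (τ j)) := by
    linear_combination (-(R j (τ i) * R i i * R (τ i) (τ j))) * h1
      - (R i i * R (τ i) j * R (τ i) (τ j)) * h2
  exact mul_right_cancel₀
    (mul_ne_zero (mul_ne_zero (mul_ne_zero (hR0 _ _) (hR0 _ _)) (hR0 _ _)) (hR0 _ _))
    key
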